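/- Let G ∈ ℝ^{n×m} have full column rank (so GᵀG is positive definite), and let F ∈ ℝ^{n×r} with r ≥ m. Suppose ‖F Fᵀ − G Gᵀ‖_F < λ_min(GᵀG)/√2. Let P be the n×n matrix of the orthogonal projection of ℝ^n onto the column space of F. Then ‖(I − P) G‖_F ≤ ‖F Fᵀ − G Gᵀ‖_F / √(λ_min(GᵀG)). -/

import Mathlib

open Matrix

/-- Frobenius inner product of two real matrices. -/
noncomputable def finner {m n : Type*} [Fintype m] [Fintype n]
    (A B : Matrix m n ℝ) : ℝ := (Aᵀ * B).trace

/-- Frobenius norm of a real matrix. -/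
noncomputable def fnorm {m n : Type*} [Fintype m] [Fintype n]
    (A : Matrix m n ℝ) : ℝ := Real.sqrt (finner A A)

open scoped Classical in
/-- Square root of a positive semidefinite real matrix (junk value `0` otherwise). -/
noncomputable def psqrt {r : ℕ} (M : Matrix (Fin r) (Fin r) ℝ) : Matrix (Fin r) (Fin r) ℝ :=
  if h : M.PosSemidef then
    h.1.eigenvectorUnitary.1 * diagonal ((RCLike.ofReal : ℝ → ℝ) ∘ Real.sqrt ∘ h.1.eigenvalues) *
      (star h.1.eigenvectorUnitary : Matrix (Fin r) (Fin r) ℝ) else 0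

open scoped Classical in
/-- Smallest eigenvalue of a symmetric real matrix (junk value `0` otherwise). -/
noncomputable def lammin {r : ℕ} (M : Matrix (Fin r) (Fin r) ℝ) : ℝ :=
  if h : M.IsHermitian then ⨅ i, h.eigenvalues i else 0

open scoped Classical in
/-- Largest eigenvalue of a symmetric real matrix (junk value `0` otherwise). -/
noncomputable def lammax {r : ℕ} (M : Matrix (Fin r) (Fin r) ℝ) : ℝ :=
  if h : M.IsHermitian then ⨆ i, h.eigenvalues i else 0

/-- The matrix of the orthogonal projection of `ℝ^n` onto the column space of `F`. -/
noncomputable def projCol {n r : ℕ} (F : Matrix (Fin n) (Fin r) ℝ) :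
    Matrix (Fin n) (Fin n) ℝ :=
  Matrix.toEuclideanLin.symm
    ((LinearMap.range (Matrix.toEuclideanLin F)).subtype ∘ₗ
      (Submodule.orthogonalProjectionOnto (LinearMap.range (Matrix.toEuclideanLin F))).toLinearMap)

/-! ### Auxiliary lemmas -/

section Aux

open Matrix

lemma aux_finner_self_nonneg {m n : Type*} [Fintype m] [Fintype n]
    (A : Matrix m n ℝ) : 0 ≤ finner A A := by
  unfold finner
  rw [Matrix.trace]
  refine Finset.sum_nonneg fun j _ => ?_
  simp only [Matrix.diag_apply, Matrix.mul_apply, Matrix.transpose_apply]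
  exact Finset.sum_nonneg fun i _ => mul_self_nonneg _

lemma aux_trace_nonneg {k : Type*} [Fintype k]
    {A : Matrix k k ℝ} (hA : A.PosSemidef) : 0 ≤ A.trace := by
  classical
  rw [Matrix.trace]
  refine Finset.sum_nonneg fun i _ => ?_
  exact hA.diag_nonneg

open scoped MatrixOrder in
lemma aux_trace_mul_nonneg {k : Type*} [Fintype k] [DecidableEq k]
    {A B : Matrix k k ℝ} (hA : A.PosSemidef) (hB : B.PosSemidef) :
    0 ≤ (A * B).trace := by
  have h1 : A * B = A * (CFC.sqrt B) * (CFC.sqrt B) := by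
    rw [Matrix.mul_assoc, CFC.sqrt_mul_sqrt_self B hB.nonneg]
  rw [h1, Matrix.trace_mul_comm]
  have h2 : (CFC.sqrt B) * (A * (CFC.sqrt B)) = (CFC.sqrt B) * A * (CFC.sqrt B)ᴴ := by
    rw [(CFC.sqrt_nonneg B).posSemidef.1.eq, Matrix.mul_assoc]
  rw [h2]
  exact aux_trace_nonneg (hA.mul_mul_conjTranspose_same (CFC.sqrt B))

lemma aux_sub_lammin_posSemidef {k : ℕ} [Nonempty (Fin k)]
    {M : Matrix (Fin k) (Fin k) ℝ} (hM : M.IsHermitian) :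
    (M - lammin M • 1).PosSemidef := by
  classical
  have hlam : ∀ i, lammin M ≤ hM.eigenvalues i := by
    intro i
    rw [lammin, dif_pos hM]
    exact ciInf_le (Finite.bddBelow_range _) i
  set U := (hM.eigenvectorUnitary : Matrix (Fin k) (Fin k) ℝ) with hU
  have hUU : U * star U = 1 := Matrix.mem_unitaryGroup_iff.mp hM.eigenvectorUnitary.2
  have hdiag : Matrix.diagonal (RCLike.ofReal ∘ hM.eigenvalues) - lammin M • (1 : Matrix (Fin k) (Fin k) ℝ)
      = Matrix.diagonal (fun i => hM.eigenvalues i - lammin M) := by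
    ext i j
    by_cases h : i = j <;>
      simp [Matrix.sub_apply, Matrix.smul_apply, Matrix.diagonal_apply, Matrix.one_apply, h]
  have key : M - lammin M • 1 = U * Matrix.diagonal (fun i => hM.eigenvalues i - lammin M) * star U := by
    have hspec := hM.spectral_theorem
    rw [Unitary.conjStarAlgAut_apply] at hspec
    calc M - lammin M • 1
        = U * Matrix.diagonal (RCLike.ofReal ∘ hM.eigenvalues) * star U - lammin M • (U * 1 * star U) := by
          rw [Matrix.mul_one, hUU, ← hspec]
      _ = U * Matrix.diagonal (RCLike.ofReal ∘ hM.eigenvalues) * star U - U * (lammin M • 1) * star U := by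
          rw [Matrix.mul_smul, Matrix.smul_mul]
      _ = U * (Matrix.diagonal (RCLike.ofReal ∘ hM.eigenvalues) - lammin M • 1) * star U := by
          rw [Matrix.mul_sub, Matrix.sub_mul]
      _ = U * Matrix.diagonal (fun i => hM.eigenvalues i - lammin M) * star U := by rw [hdiag]
  rw [key, Matrix.star_eq_conjTranspose]
  exact (Matrix.posSemidef_diagonal_iff.mpr fun i => sub_nonneg.mpr (hlam i)).mul_mul_conjTranspose_same U

lemma aux_lammin_trace_le {k : ℕ} [Nonempty (Fin k)]
    {S M : Matrix (Fin k) (Fin k) ℝ} (hS : S.PosSemidef) (hM : M.IsHermitian) :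
    lammin M * S.trace ≤ (S * M).trace := by
  have h := aux_trace_mul_nonneg hS (aux_sub_lammin_posSemidef hM)
  have heq : S * (M - lammin M • 1) = S * M - lammin M • S := by
    rw [Matrix.mul_sub, Matrix.mul_smul, Matrix.mul_one]
  rw [heq, Matrix.trace_sub, Matrix.trace_smul, smul_eq_mul] at h
  linarith

lemma aux_toEuclideanLin_mul {a b c : ℕ} (A : Matrix (Fin a) (Fin b) ℝ)
    (B : Matrix (Fin b) (Fin c) ℝ) :
    Matrix.toEuclideanLin (A * B) = Matrix.toEuclideanLin A ∘ₗ Matrix.toEuclideanLin B := by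
  rw [Matrix.toEuclideanLin_eq_toLin, Matrix.toEuclideanLin_eq_toLin,
    Matrix.toEuclideanLin_eq_toLin, Matrix.toLin_mul _ (PiLp.basisFun 2 ℝ (Fin b)) _]

lemma aux_toEuclideanLin_projCol {n r : ℕ} (F : Matrix (Fin n) (Fin r) ℝ) :
    Matrix.toEuclideanLin (projCol F)
      = (LinearMap.range (Matrix.toEuclideanLin F)).subtype ∘ₗ
        (Submodule.orthogonalProjectionOnto (LinearMap.range (Matrix.toEuclideanLin F))).toLinearMap := by
  rw [projCol, LinearEquiv.apply_symm_apply]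

lemma aux_projCol_transpose {n r : ℕ} (F : Matrix (Fin n) (Fin r) ℝ) :
    (projCol F)ᵀ = projCol F := by
  have hsym : (Matrix.toEuclideanLin (projCol F)).IsSymmetric := by
    rw [aux_toEuclideanLin_projCol]
    exact Submodule.starProjection_isSymmetric _
  have hsa := (LinearMap.isSymmetric_iff_isSelfAdjoint _).mp hsym
  have : Matrix.toEuclideanLin ((projCol F)ᴴ) = Matrix.toEuclideanLin (projCol F) := by
    rw [Matrix.toEuclideanLin_conjTranspose_eq_adjoint, ← LinearMap.star_eq_adjoint]
    exact hsa
  have h2 := Matrix.toEuclideanLin.injective this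
  rwa [Matrix.conjTranspose_eq_transpose_of_trivial] at h2

lemma aux_projCol_idem {n r : ℕ} (F : Matrix (Fin n) (Fin r) ℝ) :
    projCol F * projCol F = projCol F := by
  apply Matrix.toEuclideanLin.injective
  rw [aux_toEuclideanLin_mul, aux_toEuclideanLin_projCol]
  refine LinearMap.ext fun x => ?_
  simp only [LinearMap.coe_comp, Function.comp_apply, Submodule.coe_subtype,
    ContinuousLinearMap.coe_coe]
  exact congrArg _ (Submodule.orthogonalProjectionOnto_mem_subspace_eq_self _)

lemma aux_projCol_mul {n r : ℕ} (F : Matrix (Fin n) (Fin r) ℝ) :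
    projCol F * F = F := by
  apply Matrix.toEuclideanLin.injective
  rw [aux_toEuclideanLin_mul, aux_toEuclideanLin_projCol]
  refine LinearMap.ext fun x => ?_
  simp only [LinearMap.coe_comp, Function.comp_apply, Submodule.coe_subtype,
    ContinuousLinearMap.coe_coe]
  exact Submodule.starProjection_eq_self_iff.mpr (LinearMap.mem_range_self _ x)

end Aux

/-- Equation (15) in the paper's appendix, matrix form: `sin β ≤ ρ`.
The residual of `G` outside the column space of `F` is controlled by
`‖F Fᵀ − G Gᵀ‖_F / √(λ_min(GᵀG))`. -/
theorem stmt_9 {n m r : ℕ} (hrm : m ≤ r)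
    (G : Matrix (Fin n) (Fin m) ℝ) (hG : (Gᵀ * G).PosDef)
    (F : Matrix (Fin n) (Fin r) ℝ)
    (hclose : fnorm (F * Fᵀ - G * Gᵀ) < lammin (Gᵀ * G) / Real.sqrt 2)
    (P : Matrix (Fin n) (Fin n) ℝ) (hP : P = projCol F) :
    fnorm ((1 - P) * G) ≤ fnorm (F * Fᵀ - G * Gᵀ) / Real.sqrt (lammin (Gᵀ * G)) := by
  classical
  rcases Nat.eq_zero_or_pos m with hm | hm
  · subst hm
    have h0 : fnorm ((1 - P) * G) = 0 := by
      have : finner ((1 - P) * G) ((1 - P) * G) = 0 := by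
        simp [finner, Matrix.trace]
      rw [fnorm, this, Real.sqrt_zero]
    rw [h0]
    exact div_nonneg (Real.sqrt_nonneg _) (Real.sqrt_nonneg _)
  haveI : Nonempty (Fin m) := ⟨⟨0, hm⟩⟩
  subst hP
  set Pm := projCol F with hPdef
  set Q : Matrix (Fin n) (Fin n) ℝ := 1 - Pm with hQdef
  set E : Matrix (Fin n) (Fin n) ℝ := F * Fᵀ - G * Gᵀ with hEdef
  have hPsymm : Pmᵀ = Pm := aux_projCol_transpose F
  have hPP : Pm * Pm = Pm := aux_projCol_idem F
  have hPF : Pm * F = F := aux_projCol_mul F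
  have hQsymm : Qᵀ = Q := by rw [hQdef, Matrix.transpose_sub, Matrix.transpose_one, hPsymm]
  have hQQ : Q * Q = Q := by
    rw [hQdef, Matrix.sub_mul, Matrix.one_mul, Matrix.mul_sub, Matrix.mul_one, hPP]
    abel
  have hQF : Q * F = 0 := by
    rw [hQdef, Matrix.sub_mul, Matrix.one_mul, hPF, sub_self]
  have hFtQ : Fᵀ * Q = 0 := by
    have := congrArg Matrix.transpose hQF
    rwa [Matrix.transpose_mul, hQsymm, Matrix.transpose_zero] at this
  have hEsymm : Eᵀ = E := by
    rw [hEdef, Matrix.transpose_sub, Matrix.transpose_mul, Matrix.transpose_mul,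
      Matrix.transpose_transpose, Matrix.transpose_transpose]
  have hQE : Q * E = -(Q * (G * Gᵀ)) := by
    rw [hEdef, Matrix.mul_sub, ← Matrix.mul_assoc, hQF, Matrix.zero_mul, zero_sub]
  have hEQ : E * Q = -((G * Gᵀ) * Q) := by
    rw [hEdef, Matrix.sub_mul, Matrix.mul_assoc, hFtQ, Matrix.mul_zero, zero_sub]
  -- positivity of lammin
  have hlampos : 0 < lammin (Gᵀ * G) := by
    rw [lammin, dif_pos hG.1]
    obtain ⟨i, hi⟩ := Finite.exists_min hG.1.eigenvalues
    have heq : (⨅ j, hG.1.eigenvalues j) = hG.1.eigenvalues i :=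
      le_antisymm (ciInf_le (Finite.bddBelow_range _) i) (le_ciInf hi)
    rw [heq]
    exact hG.eigenvalues_pos i
  -- the matrix S = (QG)ᵀ(QG)
  set A : Matrix (Fin n) (Fin m) ℝ := Q * G with hAdef
  have hS : (Aᵀ * A).PosSemidef := by
    have := Matrix.posSemidef_conjTranspose_mul_self A
    rwa [Matrix.conjTranspose_eq_transpose_of_trivial] at this
  -- step 1 : lammin * tr(AᵀA) ≤ tr(AᵀA * GᵀG)
  have step1 : lammin (Gᵀ * G) * (Aᵀ * A).trace ≤ ((Aᵀ * A) * (Gᵀ * G)).trace :=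
    aux_lammin_trace_le hS hG.1
  -- step 2 : tr(AᵀA * GᵀG) = tr((QE)ᵀ(QE))
  have hmat : A * ((Gᵀ * G) * Aᵀ) = (Q * E) * (Q * E)ᵀ := by
    rw [hAdef, Matrix.transpose_mul, hQsymm, Matrix.transpose_mul Q E, hQsymm, hEsymm,
      hQE, hEQ, neg_mul_neg]
    simp only [Matrix.mul_assoc]
  have step2 : ((Aᵀ * A) * (Gᵀ * G)).trace = ((Q * E)ᵀ * (Q * E)).trace := by
    calc ((Aᵀ * A) * (Gᵀ * G)).trace
        = (Aᵀ * (A * (Gᵀ * G))).trace := by rw [Matrix.mul_assoc]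
      _ = ((A * (Gᵀ * G)) * Aᵀ).trace := Matrix.trace_mul_comm _ _
      _ = (A * ((Gᵀ * G) * Aᵀ)).trace := by rw [Matrix.mul_assoc]
      _ = ((Q * E) * (Q * E)ᵀ).trace := by rw [hmat]
      _ = ((Q * E)ᵀ * (Q * E)).trace := Matrix.trace_mul_comm _ _
  -- step 3 : tr((QE)ᵀ(QE)) ≤ tr(EᵀE)
  have hsum : (Q * E)ᵀ * (Q * E) + (Pm * E)ᵀ * (Pm * E) = Eᵀ * E := by
    rw [Matrix.transpose_mul, Matrix.transpose_mul, hQsymm, hPsymm]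
    calc Eᵀ * Q * (Q * E) + Eᵀ * Pm * (Pm * E)
        = Eᵀ * ((Q * Q) * E) + Eᵀ * ((Pm * Pm) * E) := by
          simp only [Matrix.mul_assoc]
      _ = Eᵀ * (Q * E) + Eᵀ * (Pm * E) := by rw [hQQ, hPP]
      _ = Eᵀ * (Q * E + Pm * E) := by rw [Matrix.mul_add]
      _ = Eᵀ * ((Q + Pm) * E) := by rw [Matrix.add_mul]
      _ = Eᵀ * E := by rw [hQdef, sub_add_cancel, Matrix.one_mul]
  have step3 : ((Q * E)ᵀ * (Q * E)).trace ≤ (Eᵀ * E).trace := by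
    have hPE : 0 ≤ ((Pm * E)ᵀ * (Pm * E)).trace := aux_finner_self_nonneg (Pm * E)
    have := congrArg Matrix.trace hsum
    rw [Matrix.trace_add] at this
    linarith
  -- combine
  have hkey : lammin (Gᵀ * G) * finner A A ≤ finner E E := by
    have : lammin (Gᵀ * G) * (Aᵀ * A).trace ≤ (Eᵀ * E).trace := by
      calc lammin (Gᵀ * G) * (Aᵀ * A).trace ≤ ((Aᵀ * A) * (Gᵀ * G)).trace := step1
        _ = ((Q * E)ᵀ * (Q * E)).trace := step2
        _ ≤ (Eᵀ * E).trace := step3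
    simpa [finner] using this
  -- conclude with square roots
  have hAE : finner A A ≤ finner E E / lammin (Gᵀ * G) :=
    (le_div_iff₀' hlampos).mpr hkey
  calc fnorm ((1 - Pm) * G) = Real.sqrt (finner A A) := by rw [fnorm, hAdef, hQdef]
    _ ≤ Real.sqrt (finner E E / lammin (Gᵀ * G)) := Real.sqrt_le_sqrt hAE
    _ = Real.sqrt (finner E E) / Real.sqrt (lammin (Gᵀ * G)) :=
        Real.sqrt_div (aux_finner_self_nonneg E) _
    _ = fnorm (F * Fᵀ - G * Gᵀ) / Real.sqrt (lammin (Gᵀ * G)) := by rw [fnorm, hEdef]
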